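/- Let m be the Mills ratio of the standard normal law. For all x, y > 0 one has the chain of inequalities √((x+y)/(2xy)) · m(√(2xy/(x+y))) ≥ (√y · m(√x) + √x · m(√y))/(2√(xy)) ≥ √(2/(x+y)) · m(√((x+y)/2)) ≥ (√x · m(√x) + √y · m(√y))/(x+y), and in each inequality equality holds if and only if x = y. -/

import Mathlib

open Real MeasureTheory Set Filter

/-- The standard normal probability density function. -/
noncomputable def stdNormalPDF (t : ℝ) : ℝ := Real.exp (-t ^ 2 / 2) / Real.sqrt (2 * Real.pi)

/-- The Mills ratio of the standard normal distribution: survival function over density. -/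
noncomputable def millsRatio (x : ℝ) : ℝ := (∫ t in Set.Ioi x, stdNormalPDF t) / stdNormalPDF x

lemma pdf_pos (t : ℝ) : 0 < stdNormalPDF t := by
  unfold stdNormalPDF
  positivity

lemma pdf_le_one (t : ℝ) : stdNormalPDF t ≤ 1 := by
  unfold stdNormalPDF
  rw [div_le_one (by positivity)]
  have h1 : Real.exp (-t ^ 2 / 2) ≤ 1 := by
    rw [Real.exp_le_one_iff]
    nlinarith [sq_nonneg t]
  have h2 : (1:ℝ) ≤ Real.sqrt (2 * Real.pi) := by
    rw [show (1:ℝ) = Real.sqrt 1 by simp]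
    exact Real.sqrt_le_sqrt (by nlinarith [Real.pi_gt_three])
  linarith

lemma hasDerivAt_pdf (t : ℝ) : HasDerivAt stdNormalPDF (-t * stdNormalPDF t) t := by
  unfold stdNormalPDF
  have h : HasDerivAt (fun u : ℝ => -u ^ 2 / 2) (-t) t := by
    have := ((hasDerivAt_pow 2 t).neg).div_const 2
    simpa using this.congr_deriv (by push_cast; ring)
  have := (h.exp).div_const (Real.sqrt (2 * Real.pi))
  convert this using 1 <;> try rfl
  ring

lemma continuous_pdf : Continuous stdNormalPDF :=
  (continuous_pow 2).neg.div_const 2 |>.rexp.div_const _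

lemma integrable_pdf : Integrable stdNormalPDF := by
  have h := (integrable_exp_neg_mul_sq (by norm_num : (0:ℝ) < 1/2)).div_const
    (Real.sqrt (2 * Real.pi))
  refine h.congr (ae_of_all _ fun t => ?_)
  unfold stdNormalPDF
  ring_nf

lemma tendsto_pdf_atTop : Tendsto stdNormalPDF atTop (nhds 0) := by
  have h1 : Tendsto (fun t : ℝ => -t ^ 2 / 2) atTop atBot := by
    apply Tendsto.atBot_div_const (by norm_num : (0:ℝ) < 2)
    exact tendsto_neg_atTop_atBot.comp (tendsto_pow_atTop two_ne_zero)
  have h2 := (Real.tendsto_exp_atBot.comp h1).div_const (Real.sqrt (2 * Real.pi))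
  unfold stdNormalPDF
  simpa only [Function.comp, zero_div] using h2

noncomputable def phiS (x : ℝ) : ℝ := ∫ t in Set.Ioi x, stdNormalPDF t

lemma phiS_pos (s : ℝ) : 0 < phiS s := by
  unfold phiS
  rw [setIntegral_pos_iff_support_of_nonneg_ae
    (ae_of_all _ fun t => (pdf_pos t).le) integrable_pdf.integrableOn]
  have : Function.support stdNormalPDF ∩ Ioi s = Ioi s := by
    apply inter_eq_self_of_subset_right
    intro t _
    exact (pdf_pos t).ne'
  rw [this]
  simp [Real.volume_Ioi]

/-- Upper bound: `Φ̄(s) < φ(s) * (s²+2)/(s(s²+3))` for `s > 0`. -/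
lemma phiS_upper {s : ℝ} (hs : 0 < s) :
    phiS s < stdNormalPDF s * ((s ^ 2 + 2) / (s * (s ^ 2 + 3))) := by
  set F : ℝ → ℝ := fun t => -(stdNormalPDF t * ((t ^ 2 + 2) / (t * (t ^ 2 + 3)))) with hF
  set F' : ℝ → ℝ := fun t => stdNormalPDF t * (1 + 6 / (t * (t ^ 2 + 3)) ^ 2) with hF'
  have hden : ∀ t : ℝ, 0 < t → t * (t ^ 2 + 3) ≠ 0 := fun t ht => by positivity
  have hderiv : ∀ t : ℝ, 0 < t → HasDerivAt F (F' t) t := by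
    intro t ht
    have hnum : HasDerivAt (fun u : ℝ => u ^ 2 + 2) (2 * t) t := by
      simpa using (hasDerivAt_pow 2 t).add_const 2
    have hd : HasDerivAt (fun u : ℝ => u * (u ^ 2 + 3)) (1 * (t ^ 2 + 3) + t * (2 * t)) t :=
      (hasDerivAt_id t).mul (by simpa using (hasDerivAt_pow 2 t).add_const 3)
    have hr := hnum.div hd (hden t ht)
    have := ((hasDerivAt_pdf t).mul hr).neg
    convert this using 1 <;> try rfl
    rw [hF']; simp only [Pi.div_apply, id]
    field_simp
    ring
  have htend : Tendsto F atTop (nhds 0) := by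
    have h0 : Tendsto (fun t : ℝ => stdNormalPDF t * ((t ^ 2 + 2) / (t * (t ^ 2 + 3)))) atTop
        (nhds 0) := by
      apply squeeze_zero' (g := fun t : ℝ => 2 / t)
      · filter_upwards [eventually_ge_atTop (2:ℝ)] with t ht
        have ht0 : (0:ℝ) < t := by linarith
        exact mul_nonneg (pdf_pos t).le (by positivity)
      · filter_upwards [eventually_ge_atTop (2:ℝ)] with t ht
        have ht0 : (0:ℝ) < t := by linarith
        have h1 : stdNormalPDF t * ((t ^ 2 + 2) / (t * (t ^ 2 + 3))) ≤
            (t ^ 2 + 2) / (t * (t ^ 2 + 3)) := by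
          have := pdf_le_one t
          have hpos : (0:ℝ) ≤ (t ^ 2 + 2) / (t * (t ^ 2 + 3)) := by positivity
          nlinarith [pdf_pos t]
        have h2 : (t ^ 2 + 2) / (t * (t ^ 2 + 3)) ≤ 2 / t := by
          rw [div_le_div_iff₀ (by positivity) ht0]
          nlinarith
        linarith
      · exact tendsto_const_nhds.div_atTop tendsto_id
    simpa [hF] using h0.neg
  have hint : IntegrableOn F' (Ioi s) := by
    apply Integrable.mono' ((integrable_pdf.const_mul (1 + 6 / (s * (s ^ 2 + 3)) ^ 2)).integrableOn)
    · apply ContinuousOn.aestronglyMeasurable _ measurableSet_Ioi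
      apply continuous_pdf.continuousOn.mul
      apply continuousOn_const.add
      exact continuousOn_const.div (by fun_prop) fun t ht => pow_ne_zero _ (hden t (hs.trans ht))
    · filter_upwards [self_mem_ae_restrict measurableSet_Ioi] with t ht
      have hts : s < t := ht
      have ht0 : 0 < t := hs.trans hts
      have hpe : (0:ℝ) ≤ stdNormalPDF t * (1 + 6 / (t * (t ^ 2 + 3)) ^ 2) :=
        mul_nonneg (pdf_pos t).le (by positivity)
      rw [Real.norm_eq_abs, abs_of_nonneg hpe]
      rw [mul_comm ((1:ℝ) + _)]
      apply mul_le_mul_of_nonneg_left _ (pdf_pos t).le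
      have hmono : s * (s ^ 2 + 3) ≤ t * (t ^ 2 + 3) := by nlinarith [sq_nonneg (t - s), sq_nonneg (t + s), mul_pos hs ht0]
      have h6 : 6 / (t * (t ^ 2 + 3)) ^ 2 ≤ 6 / (s * (s ^ 2 + 3)) ^ 2 := by
        apply div_le_div_of_nonneg_left (by norm_num) (by positivity)
        nlinarith [mul_pos hs (by positivity : (0:ℝ) < s ^ 2 + 3)]
      linarith
  have hcont : ContinuousWithinAt F (Ici s) s := (hderiv s hs).continuousAt.continuousWithinAt
  have key := integral_Ioi_of_hasDerivAt_of_tendsto hcont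
    (fun t ht => hderiv t (hs.trans ht)) hint htend
  have hFs : (0:ℝ) - F s = stdNormalPDF s * ((s ^ 2 + 2) / (s * (s ^ 2 + 3))) := by
    simp [hF]
  rw [hFs] at key
  have hsub : (∫ t in Ioi s, (F' t - stdNormalPDF t)) =
      (∫ t in Ioi s, F' t) - ∫ t in Ioi s, stdNormalPDF t :=
    integral_sub hint integrable_pdf.integrableOn
  have hpos : 0 < ∫ t in Ioi s, (F' t - stdNormalPDF t) := by
    rw [setIntegral_pos_iff_support_of_nonneg_ae]
    · have : Ioi s ⊆ Function.support fun t => F' t - stdNormalPDF t := by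
        intro t ht
        have ht0 : 0 < t := hs.trans ht
        have : F' t - stdNormalPDF t = stdNormalPDF t * (6 / (t * (t ^ 2 + 3)) ^ 2) := by
          rw [hF']; ring
        rw [Function.mem_support, this]
        exact (mul_pos (pdf_pos t) (by positivity)).ne'
      refine lt_of_lt_of_le ?_ (measure_mono (subset_inter this subset_rfl))
      simp [Real.volume_Ioi]
    · filter_upwards [self_mem_ae_restrict measurableSet_Ioi] with t ht
      have ht0 : 0 < t := hs.trans ht
      have : F' t - stdNormalPDF t = stdNormalPDF t * (6 / (t * (t ^ 2 + 3)) ^ 2) := by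
        rw [hF']; ring
      rw [this]; exact mul_nonneg (pdf_pos t).le (by positivity)
    · exact hint.sub integrable_pdf.integrableOn
  rw [hsub, key] at hpos
  unfold phiS
  linarith

/-- Lower bound: `φ(s) * s/(s²+1) < Φ̄(s)` for `s > 0`. -/
lemma phiS_lower {s : ℝ} (hs : 0 < s) :
    stdNormalPDF s * (s / (s ^ 2 + 1)) < phiS s := by
  set G : ℝ → ℝ := fun t => -(stdNormalPDF t * (t / (t ^ 2 + 1))) with hG
  set G' : ℝ → ℝ := fun t => stdNormalPDF t * (1 - 2 / (t ^ 2 + 1) ^ 2) with hG'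
  have hden : ∀ t : ℝ, (t ^ 2 + 1 : ℝ) ≠ 0 := fun t => by positivity
  have hderiv : ∀ t : ℝ, HasDerivAt G (G' t) t := by
    intro t
    have hd : HasDerivAt (fun u : ℝ => u ^ 2 + 1) (2 * t) t := by
      simpa using (hasDerivAt_pow 2 t).add_const 1
    have hr := (hasDerivAt_id t).div hd (hden t)
    have := ((hasDerivAt_pdf t).mul hr).neg
    convert this using 1 <;> try rfl
    rw [hG']; simp only [Pi.div_apply, id]
    field_simp
    ring
  have htend : Tendsto G atTop (nhds 0) := by
    have h0 : Tendsto (fun t : ℝ => stdNormalPDF t * (t / (t ^ 2 + 1))) atTop (nhds 0) := by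
      apply squeeze_zero' (g := fun t : ℝ => 2 / t)
      · filter_upwards [eventually_ge_atTop (1:ℝ)] with t ht
        have ht0 : (0:ℝ) < t := by linarith
        exact mul_nonneg (pdf_pos t).le (by positivity)
      · filter_upwards [eventually_ge_atTop (1:ℝ)] with t ht
        have ht0 : (0:ℝ) < t := by linarith
        have h1 : stdNormalPDF t * (t / (t ^ 2 + 1)) ≤ t / (t ^ 2 + 1) := by
          have := pdf_le_one t
          have hpos : (0:ℝ) ≤ t / (t ^ 2 + 1) := by positivity
          nlinarith [pdf_pos t]
        have h2 : t / (t ^ 2 + 1) ≤ 2 / t := by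
          rw [div_le_div_iff₀ (by positivity) ht0]
          nlinarith
        linarith
      · exact tendsto_const_nhds.div_atTop tendsto_id
    simpa [hG] using h0.neg
  have hint : IntegrableOn G' (Ioi s) := by
    apply Integrable.mono' ((integrable_pdf.const_mul 3).integrableOn)
    · apply ContinuousOn.aestronglyMeasurable _ measurableSet_Ioi
      apply continuous_pdf.continuousOn.mul
      apply continuousOn_const.sub
      exact continuousOn_const.div (by fun_prop) fun t _ => pow_ne_zero _ (hden t)
    · filter_upwards [self_mem_ae_restrict measurableSet_Ioi] with t _
      rw [Real.norm_eq_abs, abs_mul, abs_of_nonneg (pdf_pos t).le]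
      rw [mul_comm (3:ℝ)]
      apply mul_le_mul_of_nonneg_left _ (pdf_pos t).le
      rw [abs_le]
      have h1 : (0:ℝ) < 2 / (t ^ 2 + 1) ^ 2 := by positivity
      have h2 : 2 / (t ^ 2 + 1) ^ 2 ≤ 2 := by
        rw [div_le_iff₀ (by positivity)]
        nlinarith [sq_nonneg t, sq_nonneg (t^2)]
      constructor <;> linarith
  have hcont : ContinuousWithinAt G (Ici s) s := (hderiv s).continuousAt.continuousWithinAt
  have key := integral_Ioi_of_hasDerivAt_of_tendsto hcont (fun t _ => hderiv t) hint htend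
  have hGs : (0:ℝ) - G s = stdNormalPDF s * (s / (s ^ 2 + 1)) := by simp [hG]
  rw [hGs] at key
  have hsub : (∫ t in Ioi s, (stdNormalPDF t - G' t)) =
      (∫ t in Ioi s, stdNormalPDF t) - ∫ t in Ioi s, G' t :=
    integral_sub integrable_pdf.integrableOn hint
  have hpos : 0 < ∫ t in Ioi s, (stdNormalPDF t - G' t) := by
    rw [setIntegral_pos_iff_support_of_nonneg_ae]
    · have hsupp : Ioi s ⊆ Function.support fun t => stdNormalPDF t - G' t := by
        intro t _
        have : stdNormalPDF t - G' t = stdNormalPDF t * (2 / (t ^ 2 + 1) ^ 2) := by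
          rw [hG']; ring
        rw [Function.mem_support, this]
        exact (mul_pos (pdf_pos t) (by positivity)).ne'
      refine lt_of_lt_of_le ?_ (measure_mono (subset_inter hsupp subset_rfl))
      simp [Real.volume_Ioi]
    · filter_upwards [self_mem_ae_restrict measurableSet_Ioi] with t _
      have : stdNormalPDF t - G' t = stdNormalPDF t * (2 / (t ^ 2 + 1) ^ 2) := by
        rw [hG']; ring
      rw [this]; exact mul_nonneg (pdf_pos t).le (by positivity)
    · exact integrable_pdf.integrableOn.sub hint
  rw [hsub, key] at hpos
  unfold phiS
  linarith

lemma phiS_eq (x : ℝ) : phiS x = phiS 0 - ∫ t in (0:ℝ)..x, stdNormalPDF t := by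
  rcases le_or_gt 0 x with h | h
  · rw [intervalIntegral.integral_of_le h]
    have : phiS 0 = (∫ t in Ioc 0 x, stdNormalPDF t) + phiS x := by
      unfold phiS
      rw [← setIntegral_union (Ioc_disjoint_Ioi le_rfl) measurableSet_Ioi
        integrable_pdf.integrableOn integrable_pdf.integrableOn, Ioc_union_Ioi_eq_Ioi h]
    rw [this]; ring
  · rw [intervalIntegral.integral_of_ge h.le]
    have : phiS x = (∫ t in Ioc x 0, stdNormalPDF t) + phiS 0 := by
      unfold phiS
      rw [← setIntegral_union (Ioc_disjoint_Ioi le_rfl) measurableSet_Ioi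
        integrable_pdf.integrableOn integrable_pdf.integrableOn, Ioc_union_Ioi_eq_Ioi h.le]
    rw [this]; ring

lemma hasDerivAt_phiS (x : ℝ) : HasDerivAt phiS (-stdNormalPDF x) x := by
  have h : HasDerivAt (fun u => ∫ t in (0:ℝ)..u, stdNormalPDF t) (stdNormalPDF x) x :=
    intervalIntegral.integral_hasDerivAt_right (integrable_pdf.intervalIntegrable)
      continuous_pdf.stronglyMeasurable.stronglyMeasurableAtFilter
      continuous_pdf.continuousAt
  have h2 := (hasDerivAt_const x (phiS 0)).sub h
  have : phiS = fun u => phiS 0 - ∫ t in (0:ℝ)..u, stdNormalPDF t := funext phiS_eq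
  rw [this]
  exact h2.congr_deriv (zero_sub _)

lemma millsRatio_eq (x : ℝ) : millsRatio x = phiS x / stdNormalPDF x := rfl

lemma millsRatio_pos (s : ℝ) : 0 < millsRatio s := div_pos (phiS_pos s) (pdf_pos s)

lemma hasDerivAt_mills (x : ℝ) : HasDerivAt millsRatio (x * millsRatio x - 1) x := by
  have h := (hasDerivAt_phiS x).div (hasDerivAt_pdf x) (pdf_pos x).ne'
  have : millsRatio = fun u => phiS u / stdNormalPDF u := rfl
  rw [this]
  convert h using 1 <;> try rfl
  show x * (phiS x / stdNormalPDF x) - 1 = _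
  have hp : stdNormalPDF x ≠ 0 := (pdf_pos x).ne'
  rw [eq_div_iff (pow_ne_zero 2 hp)]
  field_simp
  ring

lemma continuous_mills : Continuous millsRatio :=
  continuous_iff_continuousAt.2 fun x => (hasDerivAt_mills x).continuousAt

lemma mills_lb {s : ℝ} (hs : 0 < s) : s / (s ^ 2 + 1) < millsRatio s := by
  rw [millsRatio_eq, lt_div_iff₀ (pdf_pos s)]
  calc s / (s ^ 2 + 1) * stdNormalPDF s = stdNormalPDF s * (s / (s ^ 2 + 1)) := by ring
    _ < phiS s := phiS_lower hs

lemma mills_ub {s : ℝ} (hs : 0 < s) : millsRatio s < (s ^ 2 + 2) / (s * (s ^ 2 + 3)) := by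
  rw [millsRatio_eq, div_lt_iff₀ (pdf_pos s)]
  calc phiS s < stdNormalPDF s * ((s ^ 2 + 2) / (s * (s ^ 2 + 3))) := phiS_upper hs
    _ = (s ^ 2 + 2) / (s * (s ^ 2 + 3)) * stdNormalPDF s := by ring

/-! ### The three auxiliary functions -/

noncomputable def g1 (t : ℝ) : ℝ := millsRatio (Real.sqrt t) / Real.sqrt t
noncomputable def g1d (t : ℝ) : ℝ :=
  (t * millsRatio (Real.sqrt t) - Real.sqrt t - millsRatio (Real.sqrt t)) / (2 * t * Real.sqrt t)
noncomputable def g1dd (t : ℝ) : ℝ :=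
  (millsRatio (Real.sqrt t) * (t ^ 2 - 2 * t + 3) - t * Real.sqrt t + 3 * Real.sqrt t) /
    (4 * t ^ 2 * Real.sqrt t)

noncomputable def psi (t : ℝ) : ℝ := Real.sqrt t * millsRatio (Real.sqrt t)
noncomputable def psid (t : ℝ) : ℝ :=
  ((1 + t) * millsRatio (Real.sqrt t) - Real.sqrt t) / (2 * Real.sqrt t)
noncomputable def psidd (t : ℝ) : ℝ :=
  (millsRatio (Real.sqrt t) * (t ^ 2 + 2 * t - 1) - t * Real.sqrt t - Real.sqrt t) /
    (4 * t * Real.sqrt t)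

noncomputable def phif (u : ℝ) : ℝ := g1 u⁻¹
noncomputable def phifd (u : ℝ) : ℝ := g1d u⁻¹ * -(u ^ 2)⁻¹
noncomputable def phifdd (u : ℝ) : ℝ :=
  g1dd u⁻¹ * -(u ^ 2)⁻¹ * -(u ^ 2)⁻¹ + g1d u⁻¹ * (2 * u ^ 1 / (u ^ 2) ^ 2)

/-! ### Bracket bounds -/

lemma bracket_pos {s : ℝ} (hs : 0 < s) :
    0 < millsRatio s * (s ^ 4 - 2 * s ^ 2 + 3) - s ^ 3 + 3 * s := by
  have hlb := mills_lb hs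
  have h1 : s < millsRatio s * (s ^ 2 + 1) := by
    rw [div_lt_iff₀ (by positivity)] at hlb
    linarith
  have h2 : (0:ℝ) < s ^ 4 - 2 * s ^ 2 + 3 := by nlinarith [sq_nonneg (s ^ 2 - 1)]
  have h3 : (0:ℝ) < s ^ 2 + 1 := by positivity
  nlinarith [mul_pos (sub_pos.2 h1) h2]

lemma bracket_neg {s : ℝ} (hs : 0 < s) :
    millsRatio s * (s ^ 4 + 2 * s ^ 2 - 1) - s ^ 3 - s < 0 := by
  have hub := mills_ub hs
  have h1 : millsRatio s * (s * (s ^ 2 + 3)) < s ^ 2 + 2 := by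
    rw [lt_div_iff₀ (by positivity)] at hub
    linarith
  have hm := millsRatio_pos s
  rcases le_or_gt (s ^ 4 + 2 * s ^ 2 - 1) 0 with h | h
  · nlinarith
  · nlinarith [mul_lt_mul_of_pos_right h1 h, mul_pos hs (by positivity : (0:ℝ) < s ^ 2 + 3)]

/-! ### HasDerivAt lemmas -/

lemma hasDerivAt_g1 {t : ℝ} (ht : 0 < t) : HasDerivAt g1 (g1d t) t := by
  obtain ⟨s, hs, rfl⟩ : ∃ s : ℝ, 0 < s ∧ s ^ 2 = t :=
    ⟨Real.sqrt t, Real.sqrt_pos.2 ht, Real.sq_sqrt ht.le⟩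
  have hss : Real.sqrt (s ^ 2) = s := Real.sqrt_sq hs.le
  have hsq : HasDerivAt Real.sqrt (1 / (2 * s)) (s ^ 2) := by
    have := Real.hasDerivAt_sqrt (by positivity : (s:ℝ) ^ 2 ≠ 0)
    rwa [hss] at this
  have hm : HasDerivAt (fun u => millsRatio (Real.sqrt u))
      ((s * millsRatio s - 1) * (1 / (2 * s))) (s ^ 2) := by
    have := (hasDerivAt_mills (Real.sqrt (s ^ 2))).comp (s ^ 2) hsq
    rwa [hss] at this
  have h := hm.div hsq (by rw [hss]; exact hs.ne')
  have heq : HasDerivAt (fun u => millsRatio (Real.sqrt u) / Real.sqrt u) _ (s ^ 2) := h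
  convert heq using 1 <;> try rfl
  unfold g1d
  rw [hss]
  field_simp

lemma hasDerivAt_psi {t : ℝ} (ht : 0 < t) : HasDerivAt psi (psid t) t := by
  obtain ⟨s, hs, rfl⟩ : ∃ s : ℝ, 0 < s ∧ s ^ 2 = t :=
    ⟨Real.sqrt t, Real.sqrt_pos.2 ht, Real.sq_sqrt ht.le⟩
  have hss : Real.sqrt (s ^ 2) = s := Real.sqrt_sq hs.le
  have hsq : HasDerivAt Real.sqrt (1 / (2 * s)) (s ^ 2) := by
    have := Real.hasDerivAt_sqrt (by positivity : (s:ℝ) ^ 2 ≠ 0)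
    rwa [hss] at this
  have hm : HasDerivAt (fun u => millsRatio (Real.sqrt u))
      ((s * millsRatio s - 1) * (1 / (2 * s))) (s ^ 2) := by
    have := (hasDerivAt_mills (Real.sqrt (s ^ 2))).comp (s ^ 2) hsq
    rwa [hss] at this
  have h := hsq.mul hm
  have heq : HasDerivAt (fun u => Real.sqrt u * millsRatio (Real.sqrt u)) _ (s ^ 2) := h
  convert heq using 1 <;> try rfl
  unfold psid
  rw [hss]
  field_simp
  ring

lemma hasDerivAt_g1d {t : ℝ} (ht : 0 < t) : HasDerivAt g1d (g1dd t) t := by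
  obtain ⟨s, hs, rfl⟩ : ∃ s : ℝ, 0 < s ∧ s ^ 2 = t :=
    ⟨Real.sqrt t, Real.sqrt_pos.2 ht, Real.sq_sqrt ht.le⟩
  have hss : Real.sqrt (s ^ 2) = s := Real.sqrt_sq hs.le
  have hsq : HasDerivAt Real.sqrt (1 / (2 * s)) (s ^ 2) := by
    have := Real.hasDerivAt_sqrt (by positivity : (s:ℝ) ^ 2 ≠ 0)
    rwa [hss] at this
  have hm : HasDerivAt (fun u => millsRatio (Real.sqrt u))
      ((s * millsRatio s - 1) * (1 / (2 * s))) (s ^ 2) := by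
    have := (hasDerivAt_mills (Real.sqrt (s ^ 2))).comp (s ^ 2) hsq
    rwa [hss] at this
  have hnum : HasDerivAt
      (fun u => u * millsRatio (Real.sqrt u) - Real.sqrt u - millsRatio (Real.sqrt u))
      ((1 * millsRatio s + s ^ 2 * ((s * millsRatio s - 1) * (1 / (2 * s)))) - 1 / (2 * s) -
        (s * millsRatio s - 1) * (1 / (2 * s))) (s ^ 2) := by
    have h1 := (hasDerivAt_id (s ^ 2)).mul hm
    rw [hss] at h1
    exact (h1.sub hsq).sub hm
  have hden : HasDerivAt (fun u => 2 * u * Real.sqrt u) (2 * Real.sqrt (s ^ 2) +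
      2 * s ^ 2 * (1 / (2 * s))) (s ^ 2) := by
    have h1 : HasDerivAt (fun u : ℝ => 2 * u) 2 (s ^ 2) := by
      simpa using (hasDerivAt_id (s ^ 2)).const_mul (2:ℝ)
    exact h1.mul hsq
  have h := hnum.div hden (by rw [hss]; positivity)
  have heq : HasDerivAt g1d _ (s ^ 2) := h
  convert heq using 1 <;> try rfl
  unfold g1dd
  rw [hss]
  have hm' := millsRatio_pos s
  field_simp
  ring

lemma hasDerivAt_psid {t : ℝ} (ht : 0 < t) : HasDerivAt psid (psidd t) t := by
  obtain ⟨s, hs, rfl⟩ : ∃ s : ℝ, 0 < s ∧ s ^ 2 = t :=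
    ⟨Real.sqrt t, Real.sqrt_pos.2 ht, Real.sq_sqrt ht.le⟩
  have hss : Real.sqrt (s ^ 2) = s := Real.sqrt_sq hs.le
  have hsq : HasDerivAt Real.sqrt (1 / (2 * s)) (s ^ 2) := by
    have := Real.hasDerivAt_sqrt (by positivity : (s:ℝ) ^ 2 ≠ 0)
    rwa [hss] at this
  have hm : HasDerivAt (fun u => millsRatio (Real.sqrt u))
      ((s * millsRatio s - 1) * (1 / (2 * s))) (s ^ 2) := by
    have := (hasDerivAt_mills (Real.sqrt (s ^ 2))).comp (s ^ 2) hsq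
    rwa [hss] at this
  have h1p : HasDerivAt (fun u : ℝ => 1 + u) 1 (s ^ 2) := by
    simpa using (hasDerivAt_id (s ^ 2)).const_add (1:ℝ)
  have hnum : HasDerivAt
      (fun u => (1 + u) * millsRatio (Real.sqrt u) - Real.sqrt u)
      ((1 * millsRatio s + (1 + s ^ 2) * ((s * millsRatio s - 1) * (1 / (2 * s)))) - 1 / (2 * s))
      (s ^ 2) := by
    have h1 := h1p.mul hm
    rw [hss] at h1
    exact h1.sub hsq
  have hden : HasDerivAt (fun u => 2 * Real.sqrt u) (2 * (1 / (2 * s))) (s ^ 2) :=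
    hsq.const_mul 2
  have h := hnum.div hden (by rw [hss]; positivity)
  have heq : HasDerivAt psid _ (s ^ 2) := h
  convert heq using 1 <;> try rfl
  unfold psidd
  rw [hss]
  field_simp
  ring

lemma hasDerivAt_phif {u : ℝ} (hu : 0 < u) : HasDerivAt phif (phifd u) u := by
  have h := (hasDerivAt_g1 (inv_pos.2 hu)).comp u (hasDerivAt_inv hu.ne')
  exact h

lemma hasDerivAt_phifd {u : ℝ} (hu : 0 < u) : HasDerivAt phifd (phifdd u) u := by
  have h1 : HasDerivAt (fun v => g1d v⁻¹) (g1dd u⁻¹ * -(u ^ 2)⁻¹) u :=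
    (hasDerivAt_g1d (inv_pos.2 hu)).comp u (hasDerivAt_inv hu.ne')
  have h2 : HasDerivAt (fun v : ℝ => -(v ^ 2)⁻¹) (2 * u ^ 1 / (u ^ 2) ^ 2) u := by
    have := ((hasDerivAt_pow 2 u).inv (by positivity)).neg
    convert this using 1 <;> try rfl
    push_cast
    ring
  exact h1.mul h2

/-! ### Second derivative signs -/

lemma g1dd_pos {t : ℝ} (ht : 0 < t) : 0 < g1dd t := by
  obtain ⟨s, hs, rfl⟩ : ∃ s : ℝ, 0 < s ∧ s ^ 2 = t :=
    ⟨Real.sqrt t, Real.sqrt_pos.2 ht, Real.sq_sqrt ht.le⟩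
  have hss : Real.sqrt (s ^ 2) = s := Real.sqrt_sq hs.le
  unfold g1dd
  rw [hss]
  apply div_pos _ (by positivity)
  nlinarith [bracket_pos hs]

lemma psidd_neg {t : ℝ} (ht : 0 < t) : psidd t < 0 := by
  obtain ⟨s, hs, rfl⟩ : ∃ s : ℝ, 0 < s ∧ s ^ 2 = t :=
    ⟨Real.sqrt t, Real.sqrt_pos.2 ht, Real.sq_sqrt ht.le⟩
  have hss : Real.sqrt (s ^ 2) = s := Real.sqrt_sq hs.le
  unfold psidd
  rw [hss]
  apply div_neg_of_neg_of_pos _ (by positivity)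
  nlinarith [bracket_neg hs]

lemma phifdd_neg {u : ℝ} (hu : 0 < u) : phifdd u < 0 := by
  obtain ⟨s, hs, rfl⟩ : ∃ s : ℝ, 0 < s ∧ (s ^ 2)⁻¹ = u := by
    refine ⟨Real.sqrt u⁻¹, Real.sqrt_pos.2 (inv_pos.2 hu), ?_⟩
    rw [Real.sq_sqrt (inv_pos.2 hu).le, inv_inv]
  have hinv : ((s ^ 2)⁻¹ : ℝ)⁻¹ = s ^ 2 := inv_inv _
  have hss : Real.sqrt (s ^ 2) = s := Real.sqrt_sq hs.le
  unfold phifdd g1dd g1d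
  rw [hinv, hss]
  have key : millsRatio s * (s ^ 4 + 2 * s ^ 2 - 1) - s ^ 3 - s < 0 := bracket_neg hs
  have h1 : (millsRatio s * ((s ^ 2) ^ 2 - 2 * s ^ 2 + 3) - s ^ 2 * s + 3 * s) /
        (4 * (s ^ 2) ^ 2 * s) * -(((s ^ 2)⁻¹) ^ 2)⁻¹ * -(((s ^ 2)⁻¹) ^ 2)⁻¹ +
      (s ^ 2 * millsRatio s - s - millsRatio s) / (2 * s ^ 2 * s) *
        (2 * ((s ^ 2)⁻¹) ^ 1 / (((s ^ 2)⁻¹) ^ 2) ^ 2) =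
      s ^ 3 / 4 * (millsRatio s * (s ^ 4 + 2 * s ^ 2 - 1) - s ^ 3 - s) := by
    field_simp
    ring
  rw [h1]
  exact mul_neg_of_pos_of_neg (by positivity) key

/-! ### Convexity -/

lemma strictConvexOn_g1 : StrictConvexOn ℝ (Ioi 0) g1 := by
  apply strictConvexOn_of_deriv2_pos (convex_Ioi 0)
    (fun t ht => (hasDerivAt_g1 ht).continuousAt.continuousWithinAt)
  intro x hx
  rw [interior_Ioi] at hx
  have hev : deriv g1 =ᶠ[nhds x] g1d := by
    filter_upwards [Ioi_mem_nhds hx] with t ht using (hasDerivAt_g1 ht).deriv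
  show 0 < deriv (deriv g1) x
  rw [hev.deriv_eq, (hasDerivAt_g1d hx).deriv]
  exact g1dd_pos hx

lemma strictConcaveOn_psi : StrictConcaveOn ℝ (Ioi 0) psi := by
  apply strictConcaveOn_of_deriv2_neg (convex_Ioi 0)
    (fun t ht => (hasDerivAt_psi ht).continuousAt.continuousWithinAt)
  intro x hx
  rw [interior_Ioi] at hx
  have hev : deriv psi =ᶠ[nhds x] psid := by
    filter_upwards [Ioi_mem_nhds hx] with t ht using (hasDerivAt_psi ht).deriv
  show deriv (deriv psi) x < 0
  rw [hev.deriv_eq, (hasDerivAt_psid hx).deriv]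
  exact psidd_neg hx

lemma strictConcaveOn_phif : StrictConcaveOn ℝ (Ioi 0) phif := by
  apply strictConcaveOn_of_deriv2_neg (convex_Ioi 0)
    (fun t ht => (hasDerivAt_phif ht).continuousAt.continuousWithinAt)
  intro x hx
  rw [interior_Ioi] at hx
  have hev : deriv phif =ᶠ[nhds x] phifd := by
    filter_upwards [Ioi_mem_nhds hx] with t ht using (hasDerivAt_phif ht).deriv
  show deriv (deriv phif) x < 0
  rw [hev.deriv_eq, (hasDerivAt_phifd hx).deriv]
  exact phifdd_neg hx

lemma midpoint_lt {f : ℝ → ℝ} (hf : StrictConvexOn ℝ (Ioi 0) f) {a b : ℝ} (ha : 0 < a)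
    (hb : 0 < b) (hne : a ≠ b) : f ((a + b) / 2) < (f a + f b) / 2 := by
  have h := hf.2 (mem_Ioi.2 ha) (mem_Ioi.2 hb) hne (by norm_num : (0:ℝ) < 1/2)
    (by norm_num : (0:ℝ) < 1/2) (by norm_num)
  simp only [smul_eq_mul] at h
  have e : (1/2 : ℝ) * a + (1/2 : ℝ) * b = (a + b) / 2 := by ring
  rw [e] at h
  linarith

lemma midpoint_gt {f : ℝ → ℝ} (hf : StrictConcaveOn ℝ (Ioi 0) f) {a b : ℝ} (ha : 0 < a)
    (hb : 0 < b) (hne : a ≠ b) : (f a + f b) / 2 < f ((a + b) / 2) := by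
  have h := hf.2 (mem_Ioi.2 ha) (mem_Ioi.2 hb) hne (by norm_num : (0:ℝ) < 1/2)
    (by norm_num : (0:ℝ) < 1/2) (by norm_num)
  simp only [smul_eq_mul] at h
  have e : (1/2 : ℝ) * a + (1/2 : ℝ) * b = (a + b) / 2 := by ring
  rw [e] at h
  linarith

/-! ### Rewriting the four expressions -/

lemma exprA_eq {x y : ℝ} (hx : 0 < x) (hy : 0 < y) :
    Real.sqrt ((x + y) / (2 * x * y)) * millsRatio (Real.sqrt (2 * x * y / (x + y))) =
      g1 (2 * x * y / (x + y)) := by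
  rw [show (x + y) / (2 * x * y) = (2 * x * y / (x + y))⁻¹ from (inv_div _ _).symm,
    Real.sqrt_inv]
  unfold g1
  rw [div_eq_mul_inv, mul_comm]
  exact (div_eq_mul_inv _ _).symm

lemma exprB_eq {x y : ℝ} (hx : 0 < x) (hy : 0 < y) :
    (Real.sqrt y * millsRatio (Real.sqrt x) + Real.sqrt x * millsRatio (Real.sqrt y)) /
      (2 * Real.sqrt (x * y)) = (g1 x + g1 y) / 2 := by
  have hsx : (0:ℝ) < Real.sqrt x := Real.sqrt_pos.2 hx
  have hsy : (0:ℝ) < Real.sqrt y := Real.sqrt_pos.2 hy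
  rw [Real.sqrt_mul hx.le]
  unfold g1
  field_simp

lemma exprC_eq {x y : ℝ} (hx : 0 < x) (hy : 0 < y) :
    Real.sqrt (2 / (x + y)) * millsRatio (Real.sqrt ((x + y) / 2)) = g1 ((x + y) / 2) := by
  rw [show 2 / (x + y) = ((x + y) / 2)⁻¹ from (inv_div _ _).symm, Real.sqrt_inv]
  unfold g1
  rw [div_eq_mul_inv, mul_comm]
  exact (div_eq_mul_inv _ _).symm

lemma g1_harm {x y : ℝ} (hx : 0 < x) (hy : 0 < y) :
    g1 (2 * x * y / (x + y)) = phif ((x⁻¹ + y⁻¹) / 2) := by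
  unfold phif
  congr 1
  rw [eq_comm]
  field_simp
  ring

lemma g1_phif {x : ℝ} (hx : 0 < x) : g1 x = phif x⁻¹ := by
  unfold phif
  rw [inv_inv]

lemma g1_psi {t : ℝ} (ht : 0 < t) : g1 t = psi t / t := by
  have hs : (0:ℝ) < Real.sqrt t := Real.sqrt_pos.2 ht
  have hs2 : Real.sqrt t * Real.sqrt t = t := Real.mul_self_sqrt ht.le
  unfold g1 psi
  rw [eq_div_iff ht.ne', div_mul_eq_mul_div, mul_comm (Real.sqrt t) (millsRatio (Real.sqrt t)),
    mul_div_assoc, Real.div_sqrt]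

/-! ### Strict inequalities for x ≠ y -/

lemma strict1 {x y : ℝ} (hx : 0 < x) (hy : 0 < y) (hne : x ≠ y) :
    (Real.sqrt y * millsRatio (Real.sqrt x) + Real.sqrt x * millsRatio (Real.sqrt y)) /
      (2 * Real.sqrt (x * y)) <
    Real.sqrt ((x + y) / (2 * x * y)) * millsRatio (Real.sqrt (2 * x * y / (x + y))) := by
  rw [exprA_eq hx hy, exprB_eq hx hy, g1_harm hx hy, g1_phif hx, g1_phif hy]
  exact midpoint_gt strictConcaveOn_phif (inv_pos.2 hx) (inv_pos.2 hy)
    (fun h => hne (inv_injective h))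

lemma strict2 {x y : ℝ} (hx : 0 < x) (hy : 0 < y) (hne : x ≠ y) :
    Real.sqrt (2 / (x + y)) * millsRatio (Real.sqrt ((x + y) / 2)) <
      (Real.sqrt y * millsRatio (Real.sqrt x) + Real.sqrt x * millsRatio (Real.sqrt y)) /
        (2 * Real.sqrt (x * y)) := by
  rw [exprC_eq hx hy, exprB_eq hx hy]
  exact midpoint_lt strictConvexOn_g1 hx hy hne

lemma strict3 {x y : ℝ} (hx : 0 < x) (hy : 0 < y) (hne : x ≠ y) :
    (Real.sqrt x * millsRatio (Real.sqrt x) + Real.sqrt y * millsRatio (Real.sqrt y)) /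
      (x + y) <
    Real.sqrt (2 / (x + y)) * millsRatio (Real.sqrt ((x + y) / 2)) := by
  have hxy : (0:ℝ) < x + y := by linarith
  rw [exprC_eq hx hy, g1_psi (by linarith : (0:ℝ) < (x + y) / 2)]
  have h := midpoint_gt strictConcaveOn_psi hx hy hne
  have hD : (Real.sqrt x * millsRatio (Real.sqrt x) + Real.sqrt y * millsRatio (Real.sqrt y)) /
      (x + y) = ((psi x + psi y) / 2) / ((x + y) / 2) := by
    unfold psi
    rw [div_div_div_comm]
    norm_num
  rw [hD]
  exact (div_lt_div_iff_of_pos_right (by linarith : (0:ℝ) < (x + y) / 2)).2 h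

/-! ### Equalities at x = y -/

lemma eqA {x : ℝ} (hx : 0 < x) :
    Real.sqrt ((x + x) / (2 * x * x)) * millsRatio (Real.sqrt (2 * x * x / (x + x))) = g1 x := by
  rw [exprA_eq hx hx, show 2 * x * x / (x + x) = x by field_simp; ring]

lemma eqB {x : ℝ} (hx : 0 < x) :
    (Real.sqrt x * millsRatio (Real.sqrt x) + Real.sqrt x * millsRatio (Real.sqrt x)) /
      (2 * Real.sqrt (x * x)) = g1 x := by
  rw [exprB_eq hx hx]
  ring

lemma eqC {x : ℝ} (hx : 0 < x) :
    Real.sqrt (2 / (x + x)) * millsRatio (Real.sqrt ((x + x) / 2)) = g1 x := by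
  rw [exprC_eq hx hx, show (x + x) / 2 = x by ring]

lemma eqD {x : ℝ} (hx : 0 < x) :
    (Real.sqrt x * millsRatio (Real.sqrt x) + Real.sqrt x * millsRatio (Real.sqrt x)) /
      (x + x) = g1 x := by
  rw [g1_psi hx]
  unfold psi
  field_simp

/-- For all `x, y > 0`, the chain of inequalities
`√((x+y)/(2xy)) m(√(2xy/(x+y))) ≥ (√y m(√x) + √x m(√y))/(2√(xy))`
`≥ √(2/(x+y)) m(√((x+y)/2)) ≥ (√x m(√x) + √y m(√y))/(x+y)`
holds for the Mills ratio `m` of the standard normal law, and in each inequality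
equality holds if and only if `x = y`. -/
theorem millsRatio_sqrt_chain_of_inequalities (x y : ℝ) (hx : 0 < x) (hy : 0 < y) :
    (Real.sqrt ((x + y) / (2 * x * y)) * millsRatio (Real.sqrt (2 * x * y / (x + y))) ≥
        (Real.sqrt y * millsRatio (Real.sqrt x) + Real.sqrt x * millsRatio (Real.sqrt y)) /
          (2 * Real.sqrt (x * y)) ∧
      (Real.sqrt y * millsRatio (Real.sqrt x) + Real.sqrt x * millsRatio (Real.sqrt y)) /
          (2 * Real.sqrt (x * y)) ≥
        Real.sqrt (2 / (x + y)) * millsRatio (Real.sqrt ((x + y) / 2)) ∧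
      Real.sqrt (2 / (x + y)) * millsRatio (Real.sqrt ((x + y) / 2)) ≥
        (Real.sqrt x * millsRatio (Real.sqrt x) + Real.sqrt y * millsRatio (Real.sqrt y)) /
          (x + y)) ∧
    ((Real.sqrt ((x + y) / (2 * x * y)) * millsRatio (Real.sqrt (2 * x * y / (x + y))) =
        (Real.sqrt y * millsRatio (Real.sqrt x) + Real.sqrt x * millsRatio (Real.sqrt y)) /
          (2 * Real.sqrt (x * y)) ↔ x = y) ∧
      ((Real.sqrt y * millsRatio (Real.sqrt x) + Real.sqrt x * millsRatio (Real.sqrt y)) /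
          (2 * Real.sqrt (x * y)) =
        Real.sqrt (2 / (x + y)) * millsRatio (Real.sqrt ((x + y) / 2)) ↔ x = y) ∧
      (Real.sqrt (2 / (x + y)) * millsRatio (Real.sqrt ((x + y) / 2)) =
        (Real.sqrt x * millsRatio (Real.sqrt x) + Real.sqrt y * millsRatio (Real.sqrt y)) /
          (x + y) ↔ x = y)) := by
  rcases eq_or_ne x y with rfl | hne
  · have hA := eqA hx
    have hB := eqB hx
    have hC := eqC hx
    have hD := eqD hx
    refine ⟨⟨ge_of_eq (by rw [hA, hB]), ge_of_eq (by rw [hB, hC]), ge_of_eq (by rw [hC, hD])⟩,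
      ⟨fun _ => rfl, fun _ => by rw [hA, hB]⟩, ⟨fun _ => rfl, fun _ => by rw [hB, hC]⟩,
      ⟨fun _ => rfl, fun _ => by rw [hC, hD]⟩⟩
  · have h1 := strict1 hx hy hne
    have h2 := strict2 hx hy hne
    have h3 := strict3 hx hy hne
    refine ⟨⟨le_of_lt h1, le_of_lt h2, le_of_lt h3⟩, ?_, ?_, ?_⟩ <;>
      exact ⟨fun h => absurd h (by linarith), fun h => absurd h hne⟩
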